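/- Let $g_0,\dots,g_n$ be vectors in $\mathbb{R}^p$ with $\|g_k\|\leq G$ for all $k$, where $G>0$. Then $\sum_{k=0}^{n}\frac{\|g_k\|^2}{\sqrt{G^2+\sum_{i=0}^{k-1}\|g_i\|^2}} \leq 2\sqrt{\sum_{k=0}^{n}\|g_k\|^2}$. -/
import Mathlib


open Finset

theorem stmt4 (p n : ℕ) (g : ℕ → EuclideanSpace ℝ (Fin p)) (G : ℝ) (hG : 0 < G)
    (hg : ∀ k ≤ n, ‖g k‖ ≤ G) :
    ∑ k ∈ range (n + 1), ‖g k‖ ^ 2 / Real.sqrt (G ^ 2 + ∑ i ∈ range k, ‖g i‖ ^ 2)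
      ≤ 2 * Real.sqrt (∑ k ∈ range (n + 1), ‖g k‖ ^ 2) := by
  set a : ℕ → ℝ := fun k => ‖g k‖ ^ 2 with ha
  have ha0 : ∀ k, 0 ≤ a k := fun k => sq_nonneg _
  set S : ℕ → ℝ := fun k => ∑ i ∈ range k, a i with hS
  have hS0 : ∀ k, 0 ≤ S k := fun k => Finset.sum_nonneg fun i _ => ha0 i
  have hSsucc : ∀ k, S (k + 1) = S k + a k := fun k => by
    simp [hS, Finset.sum_range_succ]
  have key : ∀ k ∈ range (n + 1),
      a k / Real.sqrt (G ^ 2 + S k)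
        ≤ 2 * (Real.sqrt (S (k + 1)) - Real.sqrt (S k)) := by
    intro k hk
    have hkn : k ≤ n := Nat.lt_succ_iff.mp (Finset.mem_range.mp hk)
    have hak : a k ≤ G ^ 2 := by
      have h := hg k hkn
      have h2 : a k = ‖g k‖ ^ 2 := rfl
      have := norm_nonneg (g k)
      nlinarith
    have hSk1 := hSsucc k
    rcases eq_or_lt_of_le (hS0 (k + 1)) with h0 | hpos
    · have hak0 : a k = 0 := by nlinarith [hS0 k, ha0 k]
      have hSk0 : S k = 0 := by nlinarith [hS0 k, ha0 k]
      simp [hak0, hSk0, ← h0]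
    · have hx : 0 < Real.sqrt (S (k + 1)) := Real.sqrt_pos.mpr hpos
      have h1 : Real.sqrt (S (k + 1)) ≤ Real.sqrt (G ^ 2 + S k) :=
        Real.sqrt_le_sqrt (by linarith)
      have step1 : a k / Real.sqrt (G ^ 2 + S k) ≤ a k / Real.sqrt (S (k + 1)) :=
        div_le_div_of_nonneg_left (ha0 k) hx h1
      refine step1.trans ?_
      rw [div_le_iff₀ hx]
      have hxs : Real.sqrt (S (k + 1)) ^ 2 = S (k + 1) := Real.sq_sqrt (hS0 _)
      have hys : Real.sqrt (S k) ^ 2 = S k := Real.sq_sqrt (hS0 _)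
      nlinarith [sq_nonneg (Real.sqrt (S (k + 1)) - Real.sqrt (S k))]
  calc ∑ k ∈ range (n + 1), a k / Real.sqrt (G ^ 2 + S k)
      ≤ ∑ k ∈ range (n + 1), 2 * (Real.sqrt (S (k + 1)) - Real.sqrt (S k)) :=
        Finset.sum_le_sum key
    _ = 2 * (Real.sqrt (S (n + 1)) - Real.sqrt (S 0)) := by
        rw [← Finset.mul_sum, Finset.sum_range_sub (fun k => Real.sqrt (S k))]
    _ = 2 * Real.sqrt (S (n + 1)) := by simp [hS]
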